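/- arXiv:math/0509126 — 3 statements merged into one kernel-verified Lean document; each statement's English description precedes it below -/
import Mathlib

section
/- Let K have characteristic zero and let (A,C,ρ) be a good binomial system, i.e., a binomial system such that b_i = c_i for all 1 ≤ i < m(ρ) and all b, c ∈ C. Then for every unipotent upper triangular matrix g ∈ GL(n,K) (ones on the diagonal), g(F(A,C,ρ)) = F(A,C,ρ). -/
open MvPolynomial

namespace Fumasoli

/-- The `i`-th standard basis exponent vector `e_i`. -/
def stdExp (ν : ℕ) (i : Fin ν) : Fin ν → ℕ := fun k => if k = i then 1 else 0

/-- The Borel order: `a ≥_Bor b` iff `a - b` is a nonnegative integer combination of the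
vectors `e_j - e_{j+1}` for `1 ≤ j < ν`.  Here `α` records the coefficients, with
`α 0 = 0` and `α j = 0` for `j ≥ ν`, and component `i` (0-indexed) of `a - b` equals
`α (i+1) - α i`. -/
def BorelGE {ν : ℕ} (a b : Fin ν → ℕ) : Prop :=
  ∃ α : ℕ → ℕ, α 0 = 0 ∧ (∀ j, ν ≤ j → α j = 0) ∧
    ∀ i : Fin ν, (a i : ℤ) - (b i : ℤ) = (α (i.val + 1) : ℤ) - (α i.val : ℤ)

/-- `M` is an upper triangular matrix of nonnegative integers with row sums `a` and
column sums `b`, i.e. `M ∈ U(a,b)`. -/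
def IsTransferMatrix {ν : ℕ} (M : Matrix (Fin ν) (Fin ν) ℕ) (a b : Fin ν → ℕ) : Prop :=
  (∀ i j : Fin ν, (j : ℕ) < (i : ℕ) → M i j = 0) ∧
  (∀ j, ∑ i, M i j = b j) ∧ (∀ i, ∑ j, M i j = a i)

/-- Integer-matrix version of `IsTransferMatrix`, with integer row and column sums. -/
def IsTransferMatrixZ {ν : ℕ} (M : Matrix (Fin ν) (Fin ν) ℤ) (a b : Fin ν → ℤ) : Prop :=
  (∀ i j : Fin ν, (j : ℕ) < (i : ℕ) → M i j = 0) ∧ (∀ i j : Fin ν, 0 ≤ M i j) ∧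
  (∀ j, ∑ i, M i j = b j) ∧ (∀ i, ∑ j, M i j = a i)

/-- `m(ρ)`: the largest (1-indexed) position where `ρ` is nonzero, or `1` if `ρ = 0`. -/
def mIdx {ν : ℕ} (ρ : Fin ν → ℤ) : ℕ :=
  max 1 ((Finset.univ.filter fun i => ρ i ≠ 0).sup fun i => (i : ℕ) + 1)

/-- `ρ_{m(ρ)} > 0`, expressed via the (1-indexed) position `m(ρ)`. -/
def mPos {ν : ℕ} (ρ : Fin ν → ℤ) : Prop :=
  ∃ i : Fin ν, (i : ℕ) + 1 = mIdx ρ ∧ 0 < ρ i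

/-- A term order on exponent vectors: a translation-invariant strict linear order. -/
structure TermOrder (ν : ℕ) where
  lt : (Fin ν → ℕ) → (Fin ν → ℕ) → Prop
  irrefl : ∀ a, ¬ lt a a
  trans : ∀ a b c, lt a b → lt b c → lt a c
  total : ∀ a b, lt a b ∨ a = b ∨ lt b a
  add_right : ∀ a b c, lt a b → lt (a + c) (b + c)

/-- Admissibility of a term order: `X_1 > X_2 > ⋯ > X_ν` and it refines total degree. -/
def TermOrder.IsAdmissible {ν : ℕ} (τ : TermOrder ν) : Prop :=
  (∀ i j : Fin ν, i < j → τ.lt (stdExp ν j) (stdExp ν i)) ∧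
  (∀ a b : Fin ν → ℕ, (∑ i, a i) < (∑ i, b i) → τ.lt a b)

/-- The (degree) reverse lexicographic order: `a < b` iff `deg a < deg b`, or the degrees
agree and the last position where `a` and `b` differ has `a` strictly bigger there. -/
def rlexLT {ν : ℕ} (a b : Fin ν → ℕ) : Prop :=
  (∑ i, a i) < (∑ i, b i) ∨
  ((∑ i, a i) = (∑ i, b i) ∧ ∃ k : Fin ν, b k < a k ∧ ∀ j : Fin ν, k < j → a j = b j)

/-- Exponent vector as a finitely supported function. -/
noncomputable def expF {ν : ℕ} (a : Fin ν → ℕ) : Fin ν →₀ ℕ := Finsupp.equivFunOnFinite.symm a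

/-- The monomial `X^a`. -/
noncomputable def mono (K : Type*) [CommSemiring K] {ν : ℕ} (a : Fin ν → ℕ) :
    MvPolynomial (Fin ν) K := monomial (expF a) 1

/-- `m` is the leading monomial (w.r.t. the strict order `lt`) of `f`. -/
def IsLeadOf {K : Type*} [CommSemiring K] {ν : ℕ}
    (lt : (Fin ν → ℕ) → (Fin ν → ℕ) → Prop)
    (f : MvPolynomial (Fin ν) K) (m : Fin ν →₀ ℕ) : Prop :=
  m ∈ f.support ∧ ∀ m' ∈ f.support, m' ≠ m → lt (⇑m') (⇑m)

/-- The initial ideal of `I` w.r.t. the strict order `lt`: generated by the leading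
monomials of the nonzero elements of `I`. -/
noncomputable def initialIdeal {K : Type*} [CommSemiring K] {ν : ℕ}
    (lt : (Fin ν → ℕ) → (Fin ν → ℕ) → Prop)
    (I : Ideal (MvPolynomial (Fin ν) K)) : Ideal (MvPolynomial (Fin ν) K) :=
  Ideal.span {p | ∃ f ∈ I, f ≠ 0 ∧ ∃ m, IsLeadOf lt f m ∧ p = monomial m (1 : K)}

/-- `G` is a Gröbner basis of `I` w.r.t. `lt`: the elements of `G` lie in `I` and their
leading monomials generate the initial ideal of `I`. -/
noncomputable def IsGroebnerBasis {K : Type*} [CommSemiring K] {ν : ℕ}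
    (lt : (Fin ν → ℕ) → (Fin ν → ℕ) → Prop)
    (G : Set (MvPolynomial (Fin ν) K)) (I : Ideal (MvPolynomial (Fin ν) K)) : Prop :=
  (∀ g ∈ G, g ∈ I) ∧
    initialIdeal lt I =
      Ideal.span {p | ∃ g ∈ G, g ≠ 0 ∧ ∃ m, IsLeadOf lt g m ∧ p = monomial m (1 : K)}

/-- The irrelevant maximal ideal `(X_1, …, X_ν)`. -/
noncomputable def irrelIdeal (K : Type*) [CommSemiring K] (ν : ℕ) :
    Ideal (MvPolynomial (Fin ν) K) := Ideal.span (Set.range X)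

/-- Saturation of `I` with respect to the irrelevant maximal ideal. -/
noncomputable def satIdeal {K : Type*} [CommRing K] {ν : ℕ}
    (I : Ideal (MvPolynomial (Fin ν) K)) : Ideal (MvPolynomial (Fin ν) K) :=
  ⨆ k : ℕ, Submodule.colon I ((irrelIdeal K ν ^ k : Ideal (MvPolynomial (Fin ν) K)) : Set (MvPolynomial (Fin ν) K))

/-- Saturation (colon) of `I` with respect to powers of the variable `X_v`. -/
noncomputable def satVar {K : Type*} [CommRing K] {ν : ℕ}
    (I : Ideal (MvPolynomial (Fin ν) K)) (v : Fin ν) : Ideal (MvPolynomial (Fin ν) K) :=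
  ⨆ k : ℕ, Submodule.colon I (Ideal.span {(X v : MvPolynomial (Fin ν) K) ^ k})

/-- The linear change of coordinates by the matrix `g`: `X_j ↦ Σ_i g_{ij} X_i`. -/
noncomputable def actMat (K : Type*) [CommRing K] {ν : ℕ}
    (g : Matrix (Fin ν) (Fin ν) K) :
    MvPolynomial (Fin ν) K →ₐ[K] MvPolynomial (Fin ν) K :=
  aeval fun j => ∑ i, C (g i j) * X i

/-- `g` is unipotent upper triangular. -/
def IsUnipotent {K : Type*} [CommRing K] {ν : ℕ} (g : Matrix (Fin ν) (Fin ν) K) : Prop :=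
  (∀ i j : Fin ν, j < i → g i j = 0) ∧ ∀ i, g i i = 1

/-- `J` is the generic initial ideal of `I` w.r.t. the order `lt`: there is a nonzero
polynomial `h` in the matrix entries such that `in(g(I)) = J` for every invertible `g`
with `h(g) ≠ 0` (a dense Zariski-open set of coordinate changes). -/
noncomputable def IsGin {K : Type*} [CommRing K] {ν : ℕ}
    (lt : (Fin ν → ℕ) → (Fin ν → ℕ) → Prop)
    (I J : Ideal (MvPolynomial (Fin ν) K)) : Prop :=
  ∃ h : MvPolynomial (Fin ν × Fin ν) K, h ≠ 0 ∧
    ∀ g : Matrix (Fin ν) (Fin ν) K, IsUnit g.det →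
      MvPolynomial.eval (fun p => g p.1 p.2) h ≠ 0 →
      initialIdeal lt (Ideal.map (actMat K g) I) = J

/-- `I` is a homogeneous ideal. -/
def IsHomog {K : Type*} [CommSemiring K] {ν : ℕ}
    (I : Ideal (MvPolynomial (Fin ν) K)) : Prop :=
  ∀ f ∈ I, ∀ d : ℕ, homogeneousComponent d f ∈ I

/-- `c + ρ`, as a vector of natural numbers. -/
def shiftVec {ν : ℕ} (ρ : Fin ν → ℤ) (c : Fin ν → ℕ) : Fin ν → ℕ :=
  fun i => ((c i : ℤ) + ρ i).toNat

/-- The set `C + ρ`. -/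
def shiftSet {ν : ℕ} (C : Set (Fin ν → ℕ)) (ρ : Fin ν → ℤ) : Set (Fin ν → ℕ) :=
  {x | ∃ c ∈ C, ∀ i, (x i : ℤ) = (c i : ℤ) + ρ i}

/-- A Borel set: upwards closed under the Borel order. -/
def IsBorelSet {ν : ℕ} (B : Set (Fin ν → ℕ)) : Prop :=
  ∀ a b : Fin ν → ℕ, BorelGE a b → b ∈ B → a ∈ B

/-- `(A, C, ρ)` is a binomial system of degree `d` in `ν` indeterminates. -/
def IsBinomialSystem {ν : ℕ} (d : ℕ) (A C : Set (Fin ν → ℕ)) (ρ : Fin ν → ℤ) : Prop :=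
  (∀ a ∈ A, ∑ i, a i = d) ∧ (∀ c ∈ C, ∑ i, c i = d) ∧
  (∀ c ∈ C, ∀ i, 0 ≤ (c i : ℤ) + ρ i) ∧ (∀ c ∈ C, (∑ i, ((c i : ℤ) + ρ i)) = (d : ℤ)) ∧
  A ∩ C = ∅ ∧ A ∩ shiftSet C ρ = ∅ ∧ C ∩ shiftSet C ρ = ∅ ∧
  IsBorelSet (A ∪ C) ∧ IsBorelSet (A ∪ shiftSet C ρ)

/-- The ideal `F(A,C,ρ)`, generated by the monomials `X^a` (`a ∈ A`) and the binomials
`X^c - X^{c+ρ}` (`c ∈ C`). -/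
noncomputable def Fideal (K : Type*) [CommRing K] {ν : ℕ}
    (A C : Set (Fin ν → ℕ)) (ρ : Fin ν → ℤ) : Ideal (MvPolynomial (Fin ν) K) :=
  Ideal.span ((fun a => mono K a) '' A ∪ (fun c => mono K c - mono K (shiftVec ρ c)) '' C)

/-- Restriction `A_i` of a set of exponent vectors to the first `i` indeterminates:
`A_i = {x : x extended by zeros lies in A}`. -/
def restrSet {ν : ℕ} (i : ℕ) (A : Set (Fin ν → ℕ)) : Set (Fin i → ℕ) :=
  {x | (fun j : Fin ν => if hj : (j : ℕ) < i then x ⟨j, hj⟩ else 0) ∈ A}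

/-- The inclusion `K[X_1,…,X_i] → K[X_1,…,X_ν]`. -/
noncomputable def inclAlg (K : Type*) [CommSemiring K] {i ν : ℕ} (h : i ≤ ν) :
    MvPolynomial (Fin i) K →ₐ[K] MvPolynomial (Fin ν) K :=
  rename (Fin.castLE h)

/-- Dimension of a module: Krull dimension of `R` modulo the annihilator. -/
noncomputable def moduleDim (R M : Type*) [CommRing R] [AddCommGroup M] [Module R M] :
    WithBot (WithTop ℕ) :=
  ringKrullDim (R ⧸ Module.annihilator R M)

/-- `M` is a Cohen-Macaulay module of dimension `t` (relative to the ideal `I`):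
its dimension is `t` and there is a regular sequence on `M` of length `t` inside `I`. -/
def IsCMofDim {R : Type*} [CommRing R] (I : Ideal R) (M : Type*)
    [AddCommGroup M] [Module R M] (t : ℕ) : Prop :=
  moduleDim R M = (t : WithBot (WithTop ℕ)) ∧
    ∃ rs : List R, rs.length = t ∧ (∀ r ∈ rs, r ∈ I) ∧ RingTheory.Sequence.IsRegular M rs

/-- The quotient module `J / J'` of an ideal by a subideal. -/
noncomputable def idealQuot {R : Type*} [CommRing R] (J J' : Ideal R) :=
  J ⧸ (Submodule.comap (Submodule.subtype J) (J' : Submodule R R))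

noncomputable instance idealQuotAddCommGroup {R : Type*} [CommRing R] (J J' : Ideal R) :
    AddCommGroup (idealQuot J J') := by unfold idealQuot; infer_instance

noncomputable instance idealQuotModule {R : Type*} [CommRing R] (J J' : Ideal R) :
    Module R (idealQuot J J') := by unfold idealQuot; infer_instance

/-- A homogeneous ideal `𝔞` is sequentially Cohen-Macaulay: there is a finite strictly
increasing filtration `𝔞 = J_0 ⊊ J_1 ⊊ ⋯ ⊊ J_r = S` by homogeneous ideals such that each
quotient `J_{i+1}/J_i` is Cohen-Macaulay and the dimensions strictly increase. -/
noncomputable def IsSeqCM {K : Type*} [CommRing K] {ν : ℕ}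
    (I : Ideal (MvPolynomial (Fin ν) K)) : Prop :=
  ∃ (r : ℕ) (J : Fin (r + 1) → Ideal (MvPolynomial (Fin ν) K)) (t : Fin r → ℕ),
    J 0 = I ∧ J (Fin.last r) = ⊤ ∧ (∀ i, IsHomog (J i)) ∧
    (∀ i : Fin r, J i.castSucc < J i.succ) ∧
    (∀ i : Fin r, IsCMofDim (irrelIdeal K ν) (idealQuot (J i.succ) (J i.castSucc)) (t i)) ∧
    StrictMono t


/-- `μ_M`: the product over the columns of `M` of the multinomial coefficients of the
column entries. -/
def muM {ν : ℕ} (M : Matrix (Fin ν) (Fin ν) ℕ) : ℕ :=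
  ∏ j, Nat.multinomial Finset.univ (fun i => M i j)

/-- `M + ρ`: add `ρ_j` to the `j`-th diagonal entry of `M` (as a matrix of naturals). -/
def addDiag {ν : ℕ} (M : Matrix (Fin ν) (Fin ν) ℕ) (ρ : Fin ν → ℤ) :
    Matrix (Fin ν) (Fin ν) ℕ :=
  fun i j => if i = j then ((M i j : ℤ) + ρ i).toNat else M i j

/-- `I` is a monomial ideal. -/
def IsMonomialIdeal {K : Type*} [CommSemiring K] {ν : ℕ}
    (I : Ideal (MvPolynomial (Fin ν) K)) : Prop :=
  ∀ f ∈ I, ∀ m ∈ f.support, monomial m (1 : K) ∈ I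

/-- Borel property of a monomial ideal: if `X^m ∈ I` and `X_j` divides `X^m`, then
`(X_i/X_j)·X^m ∈ I` for all `i ≤ j`. -/
def IsBorelIdeal {K : Type*} [CommSemiring K] {ν : ℕ}
    (I : Ideal (MvPolynomial (Fin ν) K)) : Prop :=
  ∀ m : Fin ν →₀ ℕ, monomial m (1 : K) ∈ I → ∀ i j : Fin ν, i ≤ j → m j ≠ 0 →
    monomial (m + Finsupp.single i 1 - Finsupp.single j 1) (1 : K) ∈ I



/-! ### Auxiliary lemmas for Statement 15 -/

section Stmt15Aux

variable {K : Type*} [Field K] {n d : ℕ}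

lemma mono_prod (a : Fin n → ℕ) : mono K a = ∏ i, (X i : MvPolynomial (Fin n) K) ^ a i := by
  rw [mono, monomial_eq, C_1, one_mul, Finsupp.prod_fintype]
  · rfl
  · intro i; exact pow_zero _

lemma aeval_mono (φ : Fin n → MvPolynomial (Fin n) K) (a : Fin n → ℕ) :
    aeval φ (mono K a) = ∏ i, (φ i) ^ a i := by
  rw [mono_prod, map_prod]
  simp

lemma actMat_comp (g h : Matrix (Fin n) (Fin n) K) :
    (actMat K g).comp (actMat K h) = actMat K (g * h) := by
  apply MvPolynomial.algHom_ext
  intro j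
  simp only [AlgHom.comp_apply, actMat, aeval_X, map_sum, map_mul, aeval_C]
  simp only [Finset.mul_sum, Matrix.mul_apply, ← algebraMap_eq, map_sum]
  rw [Finset.sum_comm]
  apply Finset.sum_congr rfl
  intro p _
  rw [Finset.sum_mul]
  apply Finset.sum_congr rfl
  intro i _
  rw [map_mul]
  ring

lemma actMat_one : actMat K (1 : Matrix (Fin n) (Fin n) K) = AlgHom.id K _ := by
  apply MvPolynomial.algHom_ext
  intro j
  simp only [actMat, aeval_X, AlgHom.id_apply]
  rw [Finset.sum_eq_single j]
  · simp
  · intro i _ hij; simp [Matrix.one_apply, hij]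
  · simp

lemma map_actMat_one (I : Ideal (MvPolynomial (Fin n) K)) :
    Ideal.map (actMat K (1 : Matrix (Fin n) (Fin n) K)) I = I := by
  rw [actMat_one]
  have : Ideal.map (AlgHom.id K (MvPolynomial (Fin n) K)) I
      = Ideal.map (RingHom.id (MvPolynomial (Fin n) K)) I := rfl
  rw [this, Ideal.map_id]

/-- The exponent vector `x + k e_R - k e_Q`. -/
def wv {ν : ℕ} (R Q : Fin ν) (x : Fin ν → ℕ) (k : ℕ) : Fin ν → ℕ :=
  fun i => if i = Q then x Q - k else if i = R then x R + k else x i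

lemma wv_zero (R Q : Fin n) (x : Fin n → ℕ) : wv R Q x 0 = x := by
  funext i
  simp only [wv]
  split_ifs with h1 h2
  · rw [h1]; omega
  · rw [h2]; omega
  · rfl

lemma actMat_transvection_apply (R Q : Fin n) (hRQ : R ≠ Q) (t : K) (x : Fin n → ℕ) :
    actMat K (Matrix.transvection R Q t) (mono K x) =
      ∑ k ∈ Finset.range (x Q + 1),
        (((x Q).choose k : K) * t ^ k) • mono K (wv R Q x k) := by
  have trv : ∀ i j : Fin n, (Matrix.transvection R Q t) i j
      = (if i = j then (1:K) else 0) + (if R = i ∧ Q = j then t else 0) := by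
    intro i j
    simp [Matrix.transvection, Matrix.add_apply, Matrix.one_apply, Matrix.single]
  have hφ : ∀ j, (∑ i, C ((Matrix.transvection R Q t) i j) * X i : MvPolynomial (Fin n) K)
      = if j = Q then C t * X R + X Q else X j := by
    intro j
    by_cases hj : j = Q
    · rw [if_pos hj]
      rw [← Finset.add_sum_erase _ _ (Finset.mem_univ R)]
      rw [Finset.sum_eq_single_of_mem Q (Finset.mem_erase.mpr ⟨Ne.symm hRQ, Finset.mem_univ Q⟩)]
      · have e1 : (Matrix.transvection R Q t) R j = t := by
          rw [trv]; simp [hj, hRQ]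
        have e2 : (Matrix.transvection R Q t) Q j = 1 := by
          rw [trv]; simp [hj, Ne.symm hRQ]
          exact fun h => absurd h hRQ
        rw [e1, e2, C_1, one_mul]
      · intro i hi hiQ
        have hiR : i ≠ R := (Finset.mem_erase.mp hi).1
        have : (Matrix.transvection R Q t) i j = 0 := by
          rw [trv]; simp [hj, hiQ, Ne.symm hiR]
        rw [this, map_zero, zero_mul]
    · rw [if_neg hj]
      rw [Finset.sum_eq_single j]
      · have : (Matrix.transvection R Q t) j j = 1 := by
          rw [trv]; simp
          exact fun _ h => absurd h.symm hj
        rw [this, C_1, one_mul]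
      · intro i _ hij
        have : (Matrix.transvection R Q t) i j = 0 := by
          rw [trv]; simp [hij]
          exact fun _ h => absurd h.symm hj
        rw [this, map_zero, zero_mul]
      · simp
  rw [actMat, funext hφ, aeval_mono]
  rw [← Finset.mul_prod_erase _ _ (Finset.mem_univ Q), if_pos rfl]
  rw [add_pow]
  rw [Finset.sum_mul]
  apply Finset.sum_congr rfl
  intro k hk
  have hkle : k ≤ x Q := Nat.lt_succ_iff.mp (Finset.mem_range.mp hk)
  have hprod : ∀ j ∈ Finset.univ.erase Q,
      (if j = Q then C t * X R + X Q else X j : MvPolynomial (Fin n) K) ^ x j = X j ^ x j := by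
    intro j hj
    rw [if_neg (Finset.mem_erase.mp hj).1]
  rw [Finset.prod_congr rfl hprod]
  have hmono : mono K (wv R Q x k)
      = X R ^ (x R + k) * X Q ^ (x Q - k)
        * ∏ j ∈ (Finset.univ.erase Q).erase R, (X j : MvPolynomial (Fin n) K) ^ x j := by
    rw [mono_prod]
    rw [← Finset.mul_prod_erase _ _ (Finset.mem_univ Q)]
    rw [← Finset.mul_prod_erase _ (fun j => (X j : MvPolynomial (Fin n) K) ^ wv R Q x k j)
        (Finset.mem_erase.mpr ⟨hRQ, Finset.mem_univ R⟩)]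
    have h1 : wv R Q x k Q = x Q - k := by simp [wv]
    have h2 : wv R Q x k R = x R + k := by simp [wv, hRQ]
    rw [h1, h2]
    rw [Finset.prod_congr rfl (fun j hj => by
      have hj1 := Finset.mem_erase.mp hj
      have hj2 := Finset.mem_erase.mp hj1.2
      rw [show wv R Q x k j = x j by simp [wv, hj1.1, hj2.1]])]
    ring
  rw [hmono]
  rw [← Finset.mul_prod_erase _ (fun j => (X j : MvPolynomial (Fin n) K) ^ x j)
      (Finset.mem_erase.mpr ⟨hRQ, Finset.mem_univ R⟩)]
  rw [smul_eq_C_mul, map_mul, map_natCast, map_pow, mul_pow, pow_add]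
  ring

lemma borel_wv {R Q : Fin n} (hRQ : R.val < Q.val) (x : Fin n → ℕ) {k : ℕ} (hk : k ≤ x Q) :
    BorelGE (wv R Q x k) x := by
  have hne : R ≠ Q := fun h => absurd (congrArg Fin.val h) (Nat.ne_of_lt hRQ)
  refine ⟨fun j => if R.val + 1 ≤ j ∧ j ≤ Q.val then k else 0, by simp, ?_, ?_⟩
  · intro j hj
    have hQ : Q.val < n := Q.isLt
    simp only []
    split_ifs with hcond
    · omega
    · rfl
  · intro i
    simp only []
    rcases eq_or_ne i Q with h | hiQ
    · subst h
      have h1 : wv R i x k i = x i - k := by simp [wv]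
      rw [h1, Nat.cast_sub hk]
      split_ifs <;> push_cast <;> omega
    · rcases eq_or_ne i R with h | hiR
      · subst h
        have h1 : wv i Q x k i = x i + k := by simp [wv, hne]
        rw [h1]
        split_ifs <;> push_cast <;> omega
      · have h1 : wv R Q x k i = x i := by simp [wv, hiQ, hiR]
        rw [h1]
        have hQ : i.val ≠ Q.val := fun h => hiQ (Fin.ext h)
        have hR : i.val ≠ R.val := fun h => hiR (Fin.ext h)
        split_ifs <;> push_cast <;> omega

variable {A C : Set (Fin n → ℕ)} {ρ : Fin n → ℤ}

lemma mem_AC_of_borel (hB : IsBinomialSystem d A C ρ) {b y : Fin n → ℕ}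
    (hb : b ∈ A ∪ C) (h : BorelGE y b) : y ∈ A ∪ C :=
  hB.2.2.2.2.2.2.2.1 y b h hb

lemma mem_ACs_of_borel (hB : IsBinomialSystem d A C ρ) {b y : Fin n → ℕ}
    (hb : b ∈ A ∪ shiftSet C ρ) (h : BorelGE y b) : y ∈ A ∪ shiftSet C ρ :=
  hB.2.2.2.2.2.2.2.2 y b h hb

lemma mem_A_of_borel (hB : IsBinomialSystem d A C ρ) {a y : Fin n → ℕ}
    (ha : a ∈ A) (h : BorelGE y a) : y ∈ A := by
  have h1 := mem_AC_of_borel hB (Or.inl ha) h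
  have h2 := mem_ACs_of_borel hB (Or.inl ha) h
  rcases h1 with h1 | h1
  · exact h1
  rcases h2 with h2 | h2
  · exact h2
  · exact absurd (Set.mem_inter h1 h2) (by rw [hB.2.2.2.2.2.2.1]; exact Set.notMem_empty _)

lemma shiftVec_coe (hB : IsBinomialSystem d A C ρ) {c : Fin n → ℕ} (hc : c ∈ C) (i : Fin n) :
    (shiftVec ρ c i : ℤ) = (c i : ℤ) + ρ i :=
  Int.toNat_of_nonneg (hB.2.2.1 c hc i)

lemma shiftVec_mem (hB : IsBinomialSystem d A C ρ) {c : Fin n → ℕ} (hc : c ∈ C) :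
    shiftVec ρ c ∈ shiftSet C ρ :=
  ⟨c, hc, shiftVec_coe hB hc⟩

lemma rhoQ_eq_zero (hgood : ∀ b ∈ C, ∀ c ∈ C, ∀ i : Fin n, (i : ℕ) + 1 < mIdx ρ → b i = c i)
    {c c' : Fin n → ℕ} (hc : c ∈ C) (hc' : c' ∈ C) {R Q : Fin n} (hRQ : R.val < Q.val)
    (hne : c' R ≠ c R) : ρ Q = 0 := by
  by_contra h
  apply hne
  apply hgood c' hc' c hc R
  have h1 : Q.val + 1 ≤ (Finset.univ.filter fun i => ρ i ≠ 0).sup fun i => (i : ℕ) + 1 :=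
    Finset.le_sup (f := fun i : Fin n => (i : ℕ) + 1)
      (Finset.mem_filter.mpr ⟨Finset.mem_univ Q, h⟩)
  have h2 : Q.val + 1 ≤ mIdx ρ := le_trans h1 (le_max_right _ _)
  omega

lemma map_transvection_le
    (hB : IsBinomialSystem d A C ρ)
    (hgood : ∀ b ∈ C, ∀ c ∈ C, ∀ i : Fin n, (i : ℕ) + 1 < mIdx ρ → b i = c i)
    {R Q : Fin n} (hRQ : R.val < Q.val) (t : K) :
    Ideal.map (actMat K (Matrix.transvection R Q t)) (Fideal K A C ρ) ≤ Fideal K A C ρ := by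
  have hne : R ≠ Q := fun h => absurd (congrArg Fin.val h) (Nat.ne_of_lt hRQ)
  conv_lhs => rw [Fideal]
  rw [Ideal.map_span, Ideal.span_le]
  rintro _ ⟨γ, hγ, rfl⟩
  have monoMemA : ∀ y ∈ A, mono K y ∈ Fideal K A C ρ := fun y hy =>
    Ideal.subset_span (Or.inl ⟨y, hy, rfl⟩)
  rcases hγ with ⟨a, ha, rfl⟩ | ⟨c, hc, rfl⟩
  · -- monomial generator
    rw [actMat_transvection_apply R Q hne t a]
    refine Ideal.sum_mem _ fun k hk => ?_
    have hkle : k ≤ a Q := Nat.lt_succ_iff.mp (Finset.mem_range.mp hk)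
    rw [smul_eq_C_mul]
    refine Ideal.mul_mem_left _ _ ?_
    exact monoMemA _ (mem_A_of_borel hB ha (borel_wv hRQ a hkle))
  · -- binomial generator
    rw [map_sub, actMat_transvection_apply R Q hne t c,
        actMat_transvection_apply R Q hne t (shiftVec ρ c)]
    by_cases hρQ : ρ Q = 0
    · -- aligned case
      have hQeq : shiftVec ρ c Q = c Q := by simp [shiftVec, hρQ]
      rw [hQeq, ← Finset.sum_sub_distrib]
      refine Ideal.sum_mem _ fun k hk => ?_
      have hkle : k ≤ c Q := Nat.lt_succ_iff.mp (Finset.mem_range.mp hk)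
      rw [← smul_sub, smul_eq_C_mul]
      refine Ideal.mul_mem_left _ _ ?_
      have hshift : wv R Q (shiftVec ρ c) k = shiftVec ρ (wv R Q c k) := by
        funext i
        have hnn := hB.2.2.1 c hc i
        have hnnQ := hB.2.2.1 c hc Q
        simp only [wv, shiftVec]
        split_ifs with h1 h2
        · subst h1
          rw [hρQ]
          omega
        · subst h2
          omega
        · rfl
      by_cases hwC : wv R Q c k ∈ C
      · rw [hshift]
        exact Ideal.subset_span (Or.inr ⟨_, hwC, rfl⟩)
      · have hA1 : wv R Q c k ∈ A := by
          have h := mem_AC_of_borel hB (Or.inr hc) (borel_wv hRQ c hkle)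
          rcases h with h | h
          · exact h
          · exact absurd h hwC
        have hkle' : k ≤ shiftVec ρ c Q := by rw [hQeq]; exact hkle
        have hA2 : wv R Q (shiftVec ρ c) k ∈ A := by
          have h2 := mem_ACs_of_borel hB (Or.inr (shiftVec_mem hB hc))
            (borel_wv hRQ (shiftVec ρ c) hkle')
          rcases h2 with h2 | h2
          · exact h2
          · exfalso
            obtain ⟨e, he, heq⟩ := h2
            have hee : e = wv R Q c k := by
              funext i
              have heqi := heq i
              have hci := shiftVec_coe hB hc i
              have hk2 : k ≤ shiftVec ρ c Q := hkle'
              simp only [wv, shiftVec] at heqi hci hk2 ⊢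
              split_ifs at heqi hk2 ⊢ with h1 h2
              · subst h1
                rw [hρQ] at heqi hci hk2
                omega
              · subst h2
                omega
              · omega
            exact hwC (hee ▸ he)
        exact sub_mem (monoMemA _ hA1) (monoMemA _ hA2)
    · -- case ρ Q ≠ 0
      rw [Finset.sum_range_succ' _ (c Q), Finset.sum_range_succ' _ (shiftVec ρ c Q)]
      simp only [Nat.choose_zero_right, pow_zero, Nat.cast_one, one_mul, one_smul, wv_zero]
      have hrearr : ∀ p q u v : MvPolynomial (Fin n) K,
          (p + q) - (u + v) = (q - v) + (p - u) := by intros; ring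
      rw [hrearr]
      refine add_mem (Ideal.subset_span (Or.inr ⟨c, hc, rfl⟩)) (sub_mem ?_ ?_)
      · refine Ideal.sum_mem _ fun k hk => ?_
        have hkle : k + 1 ≤ c Q := Finset.mem_range.mp hk
        rw [smul_eq_C_mul]
        refine Ideal.mul_mem_left _ _ ?_
        have hA1 : wv R Q c (k + 1) ∈ A := by
          have h := mem_AC_of_borel hB (Or.inr hc) (borel_wv hRQ c hkle)
          rcases h with h | h
          · exact h
          · exfalso
            apply hρQ
            refine rhoQ_eq_zero hgood hc h hRQ ?_
            have : wv R Q c (k + 1) R = c R + (k + 1) := by simp [wv, hne]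
            omega
        exact monoMemA _ hA1
      · refine Ideal.sum_mem _ fun k hk => ?_
        have hkle : k + 1 ≤ shiftVec ρ c Q := Finset.mem_range.mp hk
        rw [smul_eq_C_mul]
        refine Ideal.mul_mem_left _ _ ?_
        have hA2 : wv R Q (shiftVec ρ c) (k + 1) ∈ A := by
          have h2 := mem_ACs_of_borel hB (Or.inr (shiftVec_mem hB hc))
            (borel_wv hRQ (shiftVec ρ c) hkle)
          rcases h2 with h2 | h2
          · exact h2
          · exfalso
            apply hρQ
            obtain ⟨e, he, heq⟩ := h2
            refine rhoQ_eq_zero hgood hc he hRQ ?_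
            have heqR := heq R
            have hcR := shiftVec_coe hB hc R
            have hwR : wv R Q (shiftVec ρ c) (k + 1) R = shiftVec ρ c R + (k + 1) := by
              simp [wv, hne]
            rw [hwR] at heqR
            omega
        exact monoMemA _ hA2

end Stmt15Aux

/-- for a good binomial system, the ideal `F(A,C,ρ)` is fixed by every
unipotent upper triangular coordinate change. -/
theorem stmt15 {K : Type*} [Field K] [CharZero K] {n d : ℕ}
    (A C : Set (Fin n → ℕ)) (ρ : Fin n → ℤ)
    (hB : IsBinomialSystem d A C ρ)
    (hgood : ∀ b ∈ C, ∀ c ∈ C, ∀ i : Fin n, (i : ℕ) + 1 < mIdx ρ → b i = c i)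
    (g : Matrix (Fin n) (Fin n) K) (hg : IsUnipotent g) :
    Ideal.map (actMat K g) (Fideal K A C ρ) = Fideal K A C ρ := by
  set F := Fideal K A C ρ with hF
  have htv : ∀ R Q : Fin n, (R : ℕ) < (Q : ℕ) → ∀ t : K,
      Ideal.map (actMat K (Matrix.transvection R Q t)) F = F := by
    intro R Q hRQ t
    have hne : R ≠ Q := fun h => absurd (congrArg Fin.val h) (Nat.ne_of_lt hRQ)
    refine le_antisymm (map_transvection_le hB hgood hRQ t) ?_
    have h2 := map_transvection_le hB hgood hRQ (-t)
    have hcomp : Ideal.map (actMat K (Matrix.transvection R Q t))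
        (Ideal.map (actMat K (Matrix.transvection R Q (-t))) F) = F := by
      rw [Ideal.map_mapₐ, actMat_comp,
        Matrix.transvection_mul_transvection_same _ _ hne, add_neg_cancel,
        Matrix.transvection_zero, map_actMat_one]
    calc F = Ideal.map (actMat K (Matrix.transvection R Q t))
          (Ideal.map (actMat K (Matrix.transvection R Q (-t))) F) := hcomp.symm
      _ ≤ Ideal.map (actMat K (Matrix.transvection R Q t)) F := Ideal.map_mono h2
  have hmul : ∀ g h : Matrix (Fin n) (Fin n) K,
      Ideal.map (actMat K g) F = F → Ideal.map (actMat K h) F = F →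
      Ideal.map (actMat K (g * h)) F = F := by
    intro g h hg' hh'
    rw [← actMat_comp, ← Ideal.map_mapₐ, hh', hg']
  have key : ∀ r : ℕ, ∀ g : Matrix (Fin n) (Fin n) K, IsUnipotent g →
      (∀ p q : Fin n, p ≠ q → r ≤ (p : ℕ) → g p q = 0) →
      Ideal.map (actMat K g) F = F := by
    intro r
    induction r with
    | zero =>
      intro g hg hz
      have hg1 : g = 1 := by
        ext p q
        rcases eq_or_ne p q with h | h
        · rw [h, hg.2, Matrix.one_apply_eq]
        · rw [hz p q h (Nat.zero_le _), Matrix.one_apply_ne h]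
      rw [hg1, map_actMat_one]
    | succ r IH =>
      have inner : ∀ j : ℕ, ∀ g : Matrix (Fin n) (Fin n) K, IsUnipotent g →
          (∀ p q : Fin n, p ≠ q → r + 1 ≤ (p : ℕ) → g p q = 0) →
          (∀ p q : Fin n, p ≠ q → (p : ℕ) = r → j ≤ (q : ℕ) → g p q = 0) →
          Ideal.map (actMat K g) F = F := by
        intro j
        induction j with
        | zero =>
          intro g hg h1 h2
          apply IH g hg
          intro p q hpq hrp
          rcases Nat.lt_or_ge (p : ℕ) (r + 1) with h | h
          · exact h2 p q hpq (by omega) (Nat.zero_le _)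
          · exact h1 p q hpq h
        | succ j IHj =>
          intro g hg h1 h2
          by_cases hjn : j < n
          · by_cases hjr : r < j
            · have hrn : r < n := lt_trans hjr hjn
              set Rf : Fin n := ⟨r, hrn⟩ with hRf
              set Qf : Fin n := ⟨j, hjn⟩ with hQf
              have hRfval : (Rf : ℕ) = r := rfl
              have hQfval : (Qf : ℕ) = j := rfl
              have hRQ : (Rf : ℕ) < (Qf : ℕ) := hjr
              have hneRQ : Rf ≠ Qf := fun h => absurd (congrArg Fin.val h) (Nat.ne_of_lt hRQ)
              set g' : Matrix (Fin n) (Fin n) K :=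
                Matrix.of fun p q => if p = Rf ∧ q = Qf then 0 else g p q with hg'
              have hg'apply : ∀ p q, g' p q = if p = Rf ∧ q = Qf then 0 else g p q :=
                fun p q => rfl
              have hg'uni : IsUnipotent g' := by
                constructor
                · intro a b hba
                  rw [hg'apply]
                  split_ifs with h
                  · rfl
                  · exact hg.1 a b hba
                · intro a
                  rw [hg'apply]
                  split_ifs with h
                  · exact absurd (h.1.symm.trans h.2) hneRQ
                  · exact hg.2 a
              have hQfrow : ∀ q : Fin n, g Qf q = if Qf = q then 1 else 0 := by
                intro q
                rcases eq_or_ne Qf q with h | h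
                · rw [if_pos h, ← h, hg.2]
                · rw [if_neg h]
                  exact h1 Qf q h (by omega)
              have hfact : g = Matrix.transvection Rf Qf (g Rf Qf) * g' := by
                ext p q
                rcases eq_or_ne p Rf with hp | hp
                · rw [hp, Matrix.transvection_mul_apply_same]
                  have hQq : g' Qf q = if Qf = q then 1 else 0 := by
                    rw [hg'apply, if_neg (fun hh => hneRQ hh.1.symm), hQfrow]
                  rw [hQq]
                  rcases eq_or_ne q Qf with hq | hq
                  · rw [hq, hg'apply, if_pos ⟨rfl, rfl⟩, if_pos rfl]
                    ring
                  · rw [hg'apply, if_neg (fun hh => hq hh.2), if_neg (fun hh => hq hh.symm)]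
                    ring
                · rw [Matrix.transvection_mul_apply_of_ne Rf Qf p q hp, hg'apply,
                    if_neg (fun hh => hp hh.1)]
              rw [hfact]
              refine hmul _ _ (htv Rf Qf hRQ _) (IHj g' hg'uni ?_ ?_)
              · intro p q hpq hrp
                rw [hg'apply]
                split_ifs with h
                · rfl
                · exact h1 p q hpq hrp
              · intro p q hpq hpr hjq
                rw [hg'apply]
                split_ifs with h
                · rfl
                · have hpRf : p = Rf := Fin.ext (by omega)
                  have hqQf : q ≠ Qf := fun hh => h ⟨hpRf, hh⟩
                  have hq1 : j + 1 ≤ (q : ℕ) := by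
                    rcases Nat.eq_or_lt_of_le hjq with he | hl
                    · exact absurd (Fin.ext (by omega)) hqQf
                    · omega
                  exact h2 p q hpq hpr hq1
            · apply IHj g hg h1
              intro p q hpq hpr hjq
              rcases Nat.lt_or_ge (q : ℕ) (j + 1) with hlt | hge
              · have hqp : q < p := by
                  rw [Fin.lt_def]
                  have : (q : ℕ) ≠ (p : ℕ) := fun hh => hpq (Fin.ext hh).symm
                  omega
                exact hg.1 p q hqp
              · exact h2 p q hpq hpr hge
          · apply IHj g hg h1
            intro p q hpq hpr hjq
            exact absurd (lt_of_le_of_lt hjq q.isLt) (by omega)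
      intro g hg hz
      exact inner n g hg hz (fun p q hpq hpr hnq =>
        absurd (lt_of_le_of_lt hnq q.isLt) (lt_irrefl n))
  exact key n g hg (fun p q hpq hrp => absurd (lt_of_le_of_lt hrp p.isLt) (lt_irrefl n))

end Fumasoli
end

section
/- Let a, b ∈ ℕ^n_d. Then a ≥_Bor b if and only if X^a ≥_τ X^b for every admissible term order τ on the monomials of K[X_1,…,X_n]. -/
open MvPolynomial

namespace Fumasoli

/-! ### Auxiliary material for stmt17 -/

/-- Partial sum of the first `j` coordinates. -/
def Spart {ν : ℕ} (f : Fin ν → ℕ) (j : ℕ) : ℕ :=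
  ∑ i ∈ Finset.univ.filter (fun i : Fin ν => (i : ℕ) < j), f i

lemma Spart_zero {ν : ℕ} (f : Fin ν → ℕ) : Spart f 0 = 0 := by
  simp [Spart]

lemma Spart_succ {ν : ℕ} (f : Fin ν → ℕ) (i : Fin ν) :
    Spart f (i.val + 1) = Spart f i.val + f i := by
  unfold Spart
  have h : Finset.univ.filter (fun k : Fin ν => (k : ℕ) < i.val + 1)
      = insert i (Finset.univ.filter (fun k : Fin ν => (k : ℕ) < i.val)) := by
    ext k
    simp only [Finset.mem_insert, Finset.mem_filter, Finset.mem_univ, true_and, Fin.ext_iff]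
    omega
  rw [h, Finset.sum_insert (by simp)]
  omega

lemma Spart_ge {ν : ℕ} (f : Fin ν → ℕ) {j : ℕ} (h : ν ≤ j) : Spart f j = ∑ i, f i := by
  unfold Spart
  rw [Finset.filter_true_of_mem (fun k _ => lt_of_lt_of_le k.isLt h)]

lemma Spart_add {ν : ℕ} (x y : Fin ν → ℕ) (j : ℕ) :
    Spart (x + y) j = Spart x j + Spart y j := by
  unfold Spart
  rw [← Finset.sum_add_distrib]
  rfl

/-- Auxiliary admissible term order: degree, then the partial sum of the first `m`
coordinates, then lex. -/
def tauOrd (ν m : ℕ) : TermOrder ν where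
  lt x y := (∑ i, x i) < (∑ i, y i) ∨ ((∑ i, x i) = (∑ i, y i) ∧
    (Spart x m < Spart y m ∨ (Spart x m = Spart y m ∧ toLex x < toLex y)))
  irrefl a := by
    rintro (h | ⟨_, h | ⟨_, h⟩⟩)
    · exact lt_irrefl _ h
    · exact lt_irrefl _ h
    · exact lt_irrefl _ h
  trans a b c hab hbc := by
    rcases hab with h | ⟨e1, hab⟩
    · rcases hbc with h' | ⟨e2, _⟩
      · exact Or.inl (h.trans h')
      · exact Or.inl (by omega)
    · rcases hbc with h' | ⟨e2, hbc⟩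
      · exact Or.inl (by omega)
      · refine Or.inr ⟨e1.trans e2, ?_⟩
        rcases hab with h | ⟨f1, hab⟩
        · rcases hbc with h' | ⟨f2, _⟩
          · exact Or.inl (h.trans h')
          · exact Or.inl (by omega)
        · rcases hbc with h' | ⟨f2, hbc⟩
          · exact Or.inl (by omega)
          · exact Or.inr ⟨f1.trans f2, IsTrans.trans _ _ _ hab hbc⟩
  total a b := by
    rcases lt_trichotomy (∑ i, a i) (∑ i, b i) with h | h | h
    · exact Or.inl (Or.inl h)
    · rcases lt_trichotomy (Spart a m) (Spart b m) with h2 | h2 | h2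
      · exact Or.inl (Or.inr ⟨h, Or.inl h2⟩)
      · rcases lt_trichotomy (toLex a) (toLex b) with h3 | h3 | h3
        · exact Or.inl (Or.inr ⟨h, Or.inr ⟨h2, h3⟩⟩)
        · exact Or.inr (Or.inl h3)
        · exact Or.inr (Or.inr (Or.inr ⟨h.symm, Or.inr ⟨h2.symm, h3⟩⟩))
      · exact Or.inr (Or.inr (Or.inr ⟨h.symm, Or.inl h2⟩))
    · exact Or.inr (Or.inr (Or.inl h))
  add_right a b c hab := by
    rcases hab with h | ⟨e, h2 | ⟨f, h3⟩⟩
    · refine Or.inl ?_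
      simp only [Pi.add_apply, Finset.sum_add_distrib]
      omega
    · refine Or.inr ⟨by simp only [Pi.add_apply, Finset.sum_add_distrib]; omega, Or.inl ?_⟩
      rw [Spart_add, Spart_add]
      omega
    · refine Or.inr ⟨by simp only [Pi.add_apply, Finset.sum_add_distrib]; omega,
        Or.inr ⟨by rw [Spart_add, Spart_add]; omega, ?_⟩⟩
      obtain ⟨i, hj, hi⟩ := h3
      exact ⟨i, fun j hjlt => by simpa using congrArg (· + c j) (hj j hjlt),
        Nat.add_lt_add_right hi _⟩

lemma sum_stdExp {ν : ℕ} (k : Fin ν) : ∑ l, stdExp ν k l = 1 := by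
  simp [stdExp, Finset.sum_ite_eq']

lemma Spart_stdExp {ν : ℕ} (k : Fin ν) (m : ℕ) :
    Spart (stdExp ν k) m = if (k : ℕ) < m then 1 else 0 := by
  simp [Spart, stdExp, Finset.sum_ite_eq']

lemma tauOrd_admissible (ν m : ℕ) : (tauOrd ν m).IsAdmissible := by
  refine ⟨?_, ?_⟩
  · intro i j hij
    have hval : (i : ℕ) < (j : ℕ) := hij
    have hlex : toLex (stdExp ν j) < toLex (stdExp ν i) := by
      refine ⟨i, fun l hl => ?_, ?_⟩
      · simp [stdExp, hl.ne, (hl.trans hij).ne]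
      · simp [stdExp, hij.ne, hij.ne']
    refine Or.inr ⟨by rw [sum_stdExp, sum_stdExp], ?_⟩
    rw [Spart_stdExp, Spart_stdExp]
    by_cases hi : (i : ℕ) < m
    · by_cases hj2 : (j : ℕ) < m
      · exact Or.inr ⟨by rw [if_pos hi, if_pos hj2], hlex⟩
      · exact Or.inl (by rw [if_pos hi, if_neg hj2]; omega)
    · have hj2 : ¬ (j : ℕ) < m := by omega
      exact Or.inr ⟨by rw [if_neg hi, if_neg hj2], hlex⟩
  · intro x y h
    exact Or.inl h

lemma borel_step {ν : ℕ} :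
    ∀ (N : ℕ) (α : ℕ → ℕ) (a b : Fin ν → ℕ),
      (∑ j ∈ Finset.range ν, α j) = N → α 0 = 0 → (∀ j, ν ≤ j → α j = 0) →
      (∀ i : Fin ν, (a i : ℤ) - (b i : ℤ) = (α (i.val + 1) : ℤ) - (α i.val : ℤ)) →
      ∀ τ : TermOrder ν, τ.IsAdmissible → a = b ∨ τ.lt b a := by
  intro N
  induction N using Nat.strong_induction_on with
  | _ N ih =>
    intro α a b hsum h0 htop heq τ hτ
    by_cases hz : ∀ j, j < ν → α j = 0
    · left
      have hall : ∀ j, α j = 0 := fun j => by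
        rcases lt_or_ge j ν with h | h
        · exact hz j h
        · exact htop j h
      funext i
      have h1 := heq i
      rw [hall, hall] at h1
      have h2 : (a i : ℤ) = b i := by omega
      exact_mod_cast h2
    · push_neg at hz
      obtain ⟨j0, hj0ν, hj0⟩ := hz
      set s := (Finset.range ν).filter (fun j => α j ≠ 0) with hs
      have hnes : s.Nonempty := ⟨j0, by simp [hs, hj0ν, hj0]⟩
      set k := s.max' hnes with hk
      have hkmem : k ∈ s := s.max'_mem hnes
      have hkν : k < ν := Finset.mem_range.1 (Finset.mem_filter.1 hkmem).1
      have hαk : α k ≠ 0 := (Finset.mem_filter.1 hkmem).2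
      have hk0 : k ≠ 0 := fun h => hαk (h ▸ h0)
      have hgt : ∀ j, k < j → α j = 0 := by
        intro j hj
        rcases lt_or_ge j ν with h | h
        · by_contra hcon
          exact absurd (s.le_max' j (Finset.mem_filter.2 ⟨Finset.mem_range.2 h, hcon⟩))
            (not_le.2 hj)
        · exact htop j h
      have hk1 : 1 ≤ k := Nat.one_le_iff_ne_zero.2 hk0
      have hkpν : k - 1 < ν := lt_of_le_of_lt (Nat.sub_le k 1) hkν
      have h1' : (a ⟨k, hkν⟩ : ℤ) - (b ⟨k, hkν⟩ : ℤ) = (α (k + 1) : ℤ) - (α k : ℤ) :=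
        heq ⟨k, hkν⟩
      have hbk : 1 ≤ b ⟨k, hkν⟩ := by
        have h2 : α (k + 1) = 0 := hgt _ (Nat.lt_succ_self k)
        rw [h2] at h1'
        omega
      set b' : Fin ν → ℕ :=
        fun i => if (i : ℕ) = k - 1 then b i + 1 else if (i : ℕ) = k then b i - 1 else b i
        with hb'
      set α' : ℕ → ℕ := fun j => if j = k then α j - 1 else α j with hα'
      -- sum of α'
      have e1 : ∑ j ∈ Finset.range ν, α j = α k + ∑ j ∈ (Finset.range ν).erase k, α j :=
        (Finset.add_sum_erase _ _ (Finset.mem_range.2 hkν)).symm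
      have e2 : ∑ j ∈ Finset.range ν, α' j = α' k + ∑ j ∈ (Finset.range ν).erase k, α' j :=
        (Finset.add_sum_erase _ _ (Finset.mem_range.2 hkν)).symm
      have e3 : ∑ j ∈ (Finset.range ν).erase k, α' j = ∑ j ∈ (Finset.range ν).erase k, α j :=
        Finset.sum_congr rfl (fun j hj => by
          simp only [hα']
          rw [if_neg (Finset.ne_of_mem_erase hj)])
      have hα'k : α' k = α k - 1 := by simp [hα']
      have hsum' : ∑ j ∈ Finset.range ν, α' j = N - 1 := by omega
      have hN1 : 1 ≤ N := by omega
      have hα'0 : α' 0 = 0 := by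
        simp only [hα']
        rw [if_neg (Ne.symm hk0)]
        exact h0
      have hα'top : ∀ j, ν ≤ j → α' j = 0 := by
        intro j hj
        simp only [hα']
        rw [if_neg (by omega)]
        exact htop j hj
      have heq' : ∀ i : Fin ν,
          (a i : ℤ) - (b' i : ℤ) = (α' (i.val + 1) : ℤ) - (α' i.val : ℤ) := by
        intro i
        have hi := heq i
        by_cases hc1 : (i : ℕ) = k - 1
        · have hik : (i : ℕ) + 1 = k := by omega
          have hb'i : b' i = b i + 1 := by simp [hb', hc1]
          have hA1 : α' ((i : ℕ) + 1) = α k - 1 := by rw [hik]; simp [hα']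
          have hA0 : α' (i : ℕ) = α (i : ℕ) := by
            simp only [hα']
            rw [if_neg (by omega)]
          rw [hb'i, hA1, hA0]
          rw [hik] at hi
          omega
        · by_cases hc2 : (i : ℕ) = k
          · have hb'i : b' i = b i - 1 := by
              simp only [hb']
              rw [if_neg hc1, if_pos hc2]
            have hA1 : α' ((i : ℕ) + 1) = 0 := by
              simp only [hα']
              rw [if_neg (by omega), hc2]
              exact hgt _ (Nat.lt_succ_self k)
            have hA0 : α' (i : ℕ) = α k - 1 := by
              simp only [hα']
              rw [if_pos hc2, hc2]
            have h3 : α ((i : ℕ) + 1) = 0 := by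
              rw [hc2]
              exact hgt _ (Nat.lt_succ_self k)
            have hbi : 1 ≤ b i := by
              have hieq : i = (⟨k, hkν⟩ : Fin ν) := Fin.ext hc2
              rw [hieq]
              exact hbk
            rw [hb'i, hA1, hA0]
            rw [h3, hc2] at hi
            omega
          · have hb'i : b' i = b i := by simp [hb', hc1, hc2]
            have hA1 : α' ((i : ℕ) + 1) = α ((i : ℕ) + 1) := by
              simp only [hα']
              rw [if_neg (by omega)]
            have hA0 : α' (i : ℕ) = α (i : ℕ) := by
              simp only [hα']
              rw [if_neg hc2]
            rw [hb'i, hA1, hA0]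
            exact hi
      have hres := ih (N - 1) (by omega) α' a b' hsum' hα'0 hα'top heq' τ hτ
      have hstep : τ.lt b b' := by
        have hadm := hτ.1 ⟨k - 1, hkpν⟩ ⟨k, hkν⟩ (by
          show (k - 1 : ℕ) < k
          omega)
        have h2 := τ.add_right _ _ (fun i : Fin ν => if (i : ℕ) = k then b i - 1 else b i) hadm
        have e4 : stdExp ν ⟨k, hkν⟩ + (fun i : Fin ν => if (i : ℕ) = k then b i - 1 else b i) = b := by
          funext i
          simp only [Pi.add_apply, stdExp]
          by_cases h : i = (⟨k, hkν⟩ : Fin ν)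
          · subst h
            rw [if_pos rfl, if_pos rfl]
            omega
          · rw [if_neg h, if_neg (fun hc => h (Fin.ext hc))]
            omega
        have e5 : stdExp ν ⟨k - 1, hkpν⟩ + (fun i : Fin ν => if (i : ℕ) = k then b i - 1 else b i)
            = b' := by
          funext i
          simp only [Pi.add_apply, stdExp, hb']
          by_cases h : i = (⟨k - 1, hkpν⟩ : Fin ν)
          · subst h
            rw [if_pos rfl, if_pos rfl, if_neg (by show ¬ (k - 1 = k); omega)]
            omega
          · have hne2 : ¬ ((i : ℕ) = k - 1) := fun hc => h (Fin.ext hc)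
            rw [if_neg h, if_neg hne2, Nat.zero_add]
        rw [e4, e5] at h2
        exact h2
      rcases hres with h | h
      · right
        rw [h]
        exact hstep
      · exact Or.inr (τ.trans _ _ _ hstep h)

/-- `a ≥_Bor b` iff `X^a ≥_τ X^b` for every admissible term order `τ`. -/
theorem stmt17 {n d : ℕ} (a b : Fin n → ℕ)
    (ha : ∑ i, a i = d) (hb : ∑ i, b i = d) :
    BorelGE a b ↔ ∀ τ : TermOrder n, τ.IsAdmissible → (a = b ∨ τ.lt b a) := by
  constructor
  · rintro ⟨α, h0, htop, heq⟩ τ hτ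
    exact borel_step (∑ j ∈ Finset.range n, α j) α a b rfl h0 htop heq τ hτ
  · intro H
    have hS : ∀ j : ℕ, Spart b j ≤ Spart a j := by
      intro j
      rcases H (tauOrd n j) (tauOrd_admissible n j) with h | h
      · exact le_of_eq (by rw [h])
      · rcases h with h | ⟨_, h | ⟨h, _⟩⟩
        · rw [ha, hb] at h
          omega
        · exact le_of_lt h
        · exact h.le
    refine ⟨fun j => Spart a j - Spart b j, ?_, ?_, ?_⟩
    · show Spart a 0 - Spart b 0 = 0
      rw [Spart_zero, Spart_zero]
    · intro j hj
      show Spart a j - Spart b j = 0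
      rw [Spart_ge a hj, Spart_ge b hj, ha, hb]
      exact Nat.sub_self d
    · intro i
      show (a i : ℤ) - (b i : ℤ)
          = ((Spart a (i.val + 1) - Spart b (i.val + 1) : ℕ) : ℤ)
            - ((Spart a i.val - Spart b i.val : ℕ) : ℤ)
      have h1 := hS (i.val + 1)
      have h2 := hS i.val
      have e1 := Spart_succ a i
      have e2 := Spart_succ b i
      omega


end Fumasoli
end

section
/- Let (A,C,ρ) be a binomial system with ρ_{m(ρ)} > 0 and set m = m(ρ). Then every variable X_i with 1 ≤ i < m lies in the radical of the colon ideal ((F(A,C,ρ) ∩ S_(m))^sat :_{S_(m)} ((in_rlex F(A,C,ρ)) ∩ S_(m−1))^sat S_(m)), where S_(i) = K[X_1,…,X_i]. Consequently the quotient module ((in_rlex F(A,C,ρ)) ∩ S_(m−1))^sat S_(m) / (F(A,C,ρ) ∩ S_(m))^sat has dimension at most 1 over S_(m). -/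
open MvPolynomial

namespace Fumasoli

-- ==== new auxiliary material ====

lemma expF_apply {ν : ℕ} (a : Fin ν → ℕ) (i : Fin ν) : expF a i = a i := rfl

lemma expF_add {ν : ℕ} (a b : Fin ν → ℕ) : expF (fun j => a j + b j) = expF a + expF b := by
  ext i; simp [expF_apply, Finsupp.add_apply]

lemma mono_mul (K : Type*) [CommSemiring K] {ν : ℕ} (a b : Fin ν → ℕ) :
    mono K a * mono K b = mono K (fun j => a j + b j) := by
  rw [mono, mono, mono, monomial_mul, one_mul, expF_add]

/-- The ideal of polynomials all of whose monomials are divisible by `X^e` for some `e ∈ E`. -/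
def divIdeal (K : Type*) [CommSemiring K] {ν : ℕ} (E : Set (Fin ν → ℕ)) :
    Ideal (MvPolynomial (Fin ν) K) where
  carrier := {f | ∀ μ ∈ f.support, ∃ e ∈ E, expF e ≤ μ}
  zero_mem' := by intro μ hμ; simp at hμ
  add_mem' := by
    classical
    intro p q hp hq μ hμ
    rcases Finset.mem_union.mp (MvPolynomial.support_add hμ) with h | h
    exacts [hp μ h, hq μ h]
  smul_mem' := by
    classical
    intro r p hp μ hμ
    rw [smul_eq_mul] at hμ
    obtain ⟨u, hu, v, hv, rfl⟩ := Finset.mem_add.mp (MvPolynomial.support_mul r p hμ)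
    obtain ⟨e, he, hle⟩ := hp v hv
    exact ⟨e, he, hle.trans (self_le_add_left v u)⟩

lemma mem_divIdeal {K : Type*} [CommSemiring K] {ν : ℕ} {E : Set (Fin ν → ℕ)}
    {f : MvPolynomial (Fin ν) K} :
    f ∈ divIdeal K E ↔ ∀ μ ∈ f.support, ∃ e ∈ E, expF e ≤ μ := Iff.rfl

lemma le_satIdeal {K : Type*} [CommRing K] {ν : ℕ} (I : Ideal (MvPolynomial (Fin ν) K)) :
    I ≤ satIdeal I := by
  refine le_trans ?_ (le_iSup _ 0)
  intro x hx
  rw [Submodule.mem_colon]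
  intro p hp
  rw [smul_eq_mul]
  exact I.mul_mem_right p hx

lemma satIdeal_directed {K : Type*} [CommRing K] {ν : ℕ} (I : Ideal (MvPolynomial (Fin ν) K)) :
    Directed (· ≤ ·) fun k : ℕ => Submodule.colon I ((irrelIdeal K ν ^ k : Ideal (MvPolynomial (Fin ν) K)) : Set (MvPolynomial (Fin ν) K)) := by
  intro a b
  exact ⟨max a b,
    Submodule.colon_mono le_rfl (SetLike.coe_subset_coe.mpr (Ideal.pow_le_pow_right (le_max_left a b))),
    Submodule.colon_mono le_rfl (SetLike.coe_subset_coe.mpr (Ideal.pow_le_pow_right (le_max_right a b)))⟩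

lemma mem_satIdeal {K : Type*} [CommRing K] {ν : ℕ} {I : Ideal (MvPolynomial (Fin ν) K)}
    {x : MvPolynomial (Fin ν) K} :
    x ∈ satIdeal I ↔ ∃ k, x ∈ Submodule.colon I ((irrelIdeal K ν ^ k : Ideal (MvPolynomial (Fin ν) K)) : Set (MvPolynomial (Fin ν) K)) :=
  Submodule.mem_iSup_of_directed _ (satIdeal_directed I)


-- ==== chunk 2 ====

lemma mono_mem_of_A {K : Type*} [CommRing K] {n : ℕ} {A C : Set (Fin n → ℕ)} {ρ : Fin n → ℤ}
    {a : Fin n → ℕ} (ha : a ∈ A) (u : Fin n → ℕ) :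
    mono K (fun j => a j + u j) ∈ Fideal K A C ρ := by
  have h : mono K (fun j => a j + u j) = mono K u * mono K a := by
    rw [mono_mul]
    congr 1
    funext j
    omega
  rw [h]
  exact Ideal.mul_mem_left _ _ (Ideal.subset_span (Set.mem_union_left _ ⟨a, ha, rfl⟩))

lemma mono_mem_of_C {K : Type*} [CommRing K] {n d : ℕ} {A C : Set (Fin n → ℕ)} {ρ : Fin n → ℤ}
    (hB : IsBinomialSystem d A C ρ)
    {i₀ : Fin n} (hq : 0 < ρ i₀)
    {b : Fin n → ℕ} (hb : b ∈ C) (hbs : ∀ j : Fin n, i₀ ≤ j → b j = 0)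
    {i' : Fin n} (hi' : i' < i₀) (u : Fin n → ℕ) :
    mono K (fun j => b j + ((if j = i' then (ρ i₀).toNat else 0) + u j)) ∈ Fideal K A C ρ := by
  obtain ⟨hdA, hdC, hCnn, hdS, hAC, hAS, hCS, hBor1, hBor2⟩ := hB
  set q : ℕ := (ρ i₀).toNat with hqdef
  have hqz : (q : ℤ) = ρ i₀ := Int.toNat_of_nonneg hq.le
  set w : Fin n → ℕ := fun j => (if j = i' then q else 0) + u j with hw
  set sb : Fin n → ℕ := shiftVec ρ b with hsb
  have hsbz : ∀ j, (sb j : ℤ) = (b j : ℤ) + ρ j := fun j => Int.toNat_of_nonneg (hCnn b hb j)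
  have hvi : i'.val < i₀.val := hi'
  set astar : Fin n → ℕ := fun j => if j = i₀ then 0 else sb j + (if j = i' then q else 0)
    with hastar
  have hge : BorelGE astar sb := by
    refine ⟨fun j => if i'.val + 1 ≤ j ∧ j ≤ i₀.val then q else 0, by simp, ?_, ?_⟩
    · intro j hj
      have hlt := i₀.isLt
      dsimp only
      rw [if_neg (by omega)]
    · intro k
      dsimp only
      by_cases hk0 : k = i₀
      · have hkv : (k : ℕ) = i₀.val := congrArg Fin.val hk0
        have hb0 : b k = 0 := hbs k (by rw [hk0])
        have hsbk : (sb k : ℤ) = (q : ℤ) := by rw [hsbz k, hb0, hk0, hqz]; simp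
        have ha : astar k = 0 := by rw [hastar]; dsimp only; rw [if_pos hk0]
        rw [ha, if_neg (by omega : ¬(i'.val + 1 ≤ k.val + 1 ∧ k.val + 1 ≤ i₀.val)),
          if_pos (by omega : i'.val + 1 ≤ k.val ∧ k.val ≤ i₀.val), hsbk]
      · by_cases hk1 : k = i'
        · have hkv : (k : ℕ) = i'.val := congrArg Fin.val hk1
          have ha : astar k = sb k + q := by
            rw [hastar]; dsimp only; rw [if_neg hk0, if_pos hk1]
          rw [ha, if_pos (by omega : i'.val + 1 ≤ k.val + 1 ∧ k.val + 1 ≤ i₀.val),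
            if_neg (by omega : ¬(i'.val + 1 ≤ k.val ∧ k.val ≤ i₀.val))]
          push_cast
          ring
        · have hk0v : k.val ≠ i₀.val := fun h => hk0 (Fin.ext h)
          have hk1v : k.val ≠ i'.val := fun h => hk1 (Fin.ext h)
          have ha : astar k = sb k := by
            rw [hastar]; dsimp only; rw [if_neg hk0, if_neg hk1, add_zero]
          rw [ha]
          by_cases hcc : i'.val + 1 ≤ k.val ∧ k.val ≤ i₀.val
          · rw [if_pos (by omega : i'.val + 1 ≤ k.val + 1 ∧ k.val + 1 ≤ i₀.val), if_pos hcc]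
            ring
          · rw [if_neg (by omega : ¬(i'.val + 1 ≤ k.val + 1 ∧ k.val + 1 ≤ i₀.val)), if_neg hcc]
            ring
  have hsbS : sb ∈ shiftSet C ρ := ⟨b, hb, hsbz⟩
  have hastarA : astar ∈ A := by
    rcases hBor2 astar sb hge (Or.inr hsbS) with h | h
    · exact h
    · exfalso
      obtain ⟨c, hc, hcz⟩ := h
      have h1 := hcz i₀
      have h2 : astar i₀ = 0 := by simp [hastar]
      have h3 : (0 : ℤ) ≤ (c i₀ : ℤ) := Int.natCast_nonneg _
      rw [h2] at h1
      simp only [Nat.cast_zero] at h1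
      omega
  have hle : ∀ j, astar j ≤ w j + sb j := by
    intro j
    by_cases hj0 : j = i₀
    · simp [hastar, hj0]
    · by_cases hj1 : j = i'
      · simp only [hastar, hw, if_neg hj0, if_pos hj1]
        omega
      · simp only [hastar, hw, if_neg hj0, if_neg hj1]
        omega
  have h2 : mono K w * (mono K b - mono K sb) ∈ Fideal K A C ρ :=
    Ideal.mul_mem_left _ _ (Ideal.subset_span (Set.mem_union_right _ ⟨b, hb, by
      show mono K b - mono K (shiftVec ρ b) = mono K b - mono K sb
      rw [hsb]⟩))
  have h5 : mono K (fun j => w j + sb j) ∈ Fideal K A C ρ := by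
    rw [show (fun j => w j + sb j) = (fun j => astar j + (w j + sb j - astar j)) from
      funext fun j => by have := hle j; omega]
    exact mono_mem_of_A hastarA _
  have key : mono K (fun j => b j + w j) =
      mono K w * (mono K b - mono K sb) + mono K (fun j => w j + sb j) := by
    rw [mul_sub, mono_mul, mono_mul,
      show (fun j => w j + b j) = fun j => b j + w j from funext fun j => add_comm _ _]
    ring
  rw [show (fun j => b j + ((if j = i' then q else 0) + u j)) = fun j => b j + w j from rfl, key]
  exact Ideal.add_mem _ h2 h5

lemma Fideal_le_divIdeal {K : Type*} [CommRing K] {n : ℕ} {A C : Set (Fin n → ℕ)}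
    {ρ : Fin n → ℤ} (hCnn : ∀ c ∈ C, ∀ i, 0 ≤ (c i : ℤ) + ρ i) :
    Fideal K A C ρ ≤ divIdeal K (A ∪ C ∪ shiftSet C ρ) := by
  classical
  rw [Fideal, Ideal.span_le]
  rintro f (⟨a, ha, rfl⟩ | ⟨c, hc, rfl⟩)
  · intro μ hμ
    simp only [mono] at hμ
    rw [support_monomial] at hμ
    split_ifs at hμ
    · simp at hμ
    · rw [Finset.mem_singleton] at hμ
      exact ⟨a, Or.inl (Or.inl ha), hμ ▸ le_rfl⟩
  · intro μ hμ
    simp only [mono] at hμ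
    rw [sub_eq_add_neg] at hμ
    rcases Finset.mem_union.mp (MvPolynomial.support_add hμ) with h | h
    · rw [support_monomial] at h
      split_ifs at h
      · simp only [Finset.notMem_empty] at h
      · rw [Finset.mem_singleton] at h
        exact ⟨c, Or.inl (Or.inr hc), h ▸ le_rfl⟩
    · simp only [MvPolynomial.support_neg] at h
      rw [support_monomial] at h
      split_ifs at h
      · simp only [Finset.notMem_empty] at h
      · rw [Finset.mem_singleton] at h
        exact ⟨shiftVec ρ c, Or.inr ⟨c, hc, fun i => Int.toNat_of_nonneg (hCnn c hc i)⟩,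
          h ▸ le_rfl⟩

lemma initialIdeal_le_divIdeal {K : Type*} [CommRing K] {n : ℕ} {E : Set (Fin n → ℕ)}
    {lt : (Fin n → ℕ) → (Fin n → ℕ) → Prop} {I : Ideal (MvPolynomial (Fin n) K)}
    (hI : I ≤ divIdeal K E) :
    initialIdeal lt I ≤ divIdeal K E := by
  classical
  rw [initialIdeal, Ideal.span_le]
  rintro p ⟨f, hf, hf0, mμ, hlead, rfl⟩
  intro μ hμ
  rw [support_monomial] at hμ
  split_ifs at hμ
  · simp at hμ
  · rw [Finset.mem_singleton] at hμ
    obtain ⟨e, he, hle⟩ := hI hf mμ hlead.1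
    exact ⟨e, he, hμ ▸ hle⟩


-- ==== chunk 3 ====

lemma inclAlg_X {K : Type*} [CommSemiring K] {a b : ℕ} (hab : a ≤ b) (i : Fin a) :
    inclAlg K hab (X i) = X (Fin.castLE hab i) := rename_X _ _

lemma inclAlg_comp_apply {K : Type*} [CommSemiring K] {a b c : ℕ} (h1 : a ≤ b) (h2 : b ≤ c)
    (p : MvPolynomial (Fin a) K) :
    inclAlg K h2 (inclAlg K h1 p) = inclAlg K (le_trans h1 h2) p := by
  show rename (Fin.castLE h2) (rename (Fin.castLE h1) p) = rename (Fin.castLE (le_trans h1 h2)) p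
  rw [rename_rename]
  congr 1

lemma step_mul_mem {K : Type*} [Field K] {n d : ℕ} {A C : Set (Fin n → ℕ)} {ρ : Fin n → ℤ}
    (hB : IsBinomialSystem d A C ρ) {i₀ : Fin n} (hq : 0 < ρ i₀)
    {i' : Fin n} (hi' : i' < i₀)
    {h : MvPolynomial (Fin n) K} (hdiv : h ∈ divIdeal K (A ∪ C ∪ shiftSet C ρ))
    (hsupp : ∀ μ ∈ h.support, ∀ j : Fin n, i₀ ≤ j → μ j = 0) :
    (X i' : MvPolynomial (Fin n) K) ^ (ρ i₀).toNat * h ∈ Fideal K A C ρ := by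
  classical
  set q : ℕ := (ρ i₀).toNat with hqdef
  rw [as_sum h, Finset.mul_sum]
  refine Ideal.sum_mem _ fun μ hμ => ?_
  obtain ⟨e, heE, hee⟩ := mem_divIdeal.mp hdiv μ hμ
  have hee' : ∀ j, e j ≤ μ j := fun j => Finsupp.le_def.mp hee j
  have hμ0 : ∀ j : Fin n, i₀ ≤ j → μ j = 0 := hsupp μ hμ
  have hes : ∀ j : Fin n, i₀ ≤ j → e j = 0 := by
    intro j hj
    have h1 := hee' j
    rw [hμ0 j hj] at h1
    omega
  have heAC : e ∈ A ∪ C := by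
    rcases heE with (h' | h') | h'
    · exact Or.inl h'
    · exact Or.inr h'
    · exfalso
      obtain ⟨c, hc, hcz⟩ := h'
      have h1 := hcz i₀
      rw [hes i₀ le_rfl] at h1
      have h3 : (0 : ℤ) ≤ (c i₀ : ℤ) := Int.natCast_nonneg _
      simp only [Nat.cast_zero] at h1
      omega
  have hmono : monomial μ (coeff μ h) = MvPolynomial.C (coeff μ h) * monomial μ (1 : K) := by
    rw [C_mul_monomial, mul_one]
  rw [hmono, mul_left_comm]
  apply Ideal.mul_mem_left
  have hX : (X i' : MvPolynomial (Fin n) K) ^ q * monomial μ 1 =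
      monomial (μ + Finsupp.single i' q) 1 := by
    rw [X_pow_eq_monomial, monomial_mul, one_mul, add_comm]
  rw [hX]
  rcases heAC with heA | heC
  · have hv := mono_mem_of_A (K := K) (C := C) (ρ := ρ) heA
      (fun j => μ j + Finsupp.single i' q j - e j)
    have he2 : expF (fun j => e j + (μ j + Finsupp.single i' q j - e j)) =
        μ + Finsupp.single i' q := by
      ext j
      have h1 := hee' j
      simp only [expF_apply, Finsupp.add_apply]
      omega
    rw [← he2]
    exact hv
  · have hv := mono_mem_of_C (K := K) hB hq heC hes hi' (fun j => μ j - e j)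
    have he2 : expF (fun j => e j + ((if j = i' then (ρ i₀).toNat else 0) + (μ j - e j))) =
        μ + Finsupp.single i' q := by
      ext j
      have h1 := hee' j
      simp only [expF_apply, Finsupp.add_apply, Finsupp.single_apply]
      rcases eq_or_ne j i' with rfl | hj
      · simp
        omega
      · rw [if_neg hj, if_neg (Ne.symm hj)]
        omega
    rw [← he2]
    exact hv

lemma key_colon {K : Type*} [Field K] {n d : ℕ}
    (A C : Set (Fin n → ℕ)) (ρ : Fin n → ℤ)
    (hB : IsBinomialSystem d A C ρ) (hmp : mPos ρ)
    (m : ℕ) (hm : m = mIdx ρ) (hm0 : 0 < m) (hmn : m ≤ n)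
    (i : Fin m) (hi : (i : ℕ) < m - 1) :
    ∃ k : ℕ, ∀ p ∈ Ideal.map (inclAlg K (Nat.sub_le m 1))
        (satIdeal (Ideal.comap (inclAlg K (le_trans (Nat.sub_le m 1) hmn))
          (initialIdeal rlexLT (Fideal K A C ρ)))),
      (X i : MvPolynomial (Fin m) K) ^ k * p ∈
        satIdeal (Ideal.comap (inclAlg K hmn) (Fideal K A C ρ)) := by
  classical
  obtain ⟨i₀, hi₀m, hi₀pos⟩ := hmp
  rw [← hm] at hi₀m
  set q : ℕ := (ρ i₀).toNat with hqdef
  have hi' : (Fin.castLE hmn i) < i₀ := by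
    rw [Fin.lt_def]
    simp only [Fin.coe_castLE]
    omega
  have hone : ∀ g ∈ satIdeal (Ideal.comap (inclAlg K (le_trans (Nat.sub_le m 1) hmn))
      (initialIdeal rlexLT (Fideal K A C ρ))), ∃ k : ℕ,
      (X i : MvPolynomial (Fin m) K) ^ k * (inclAlg K (Nat.sub_le m 1)) g ∈
        Ideal.comap (inclAlg K hmn) (Fideal K A C ρ) := by
    intro g hg
    obtain ⟨t, hgt⟩ := mem_satIdeal.mp hg
    set i'' : Fin (m-1) := ⟨i.val, hi⟩ with hi''
    have hXmem : (X i'' : MvPolynomial (Fin (m-1)) K) ^ t ∈ irrelIdeal K (m-1) ^ t :=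
      Ideal.pow_mem_pow (Ideal.subset_span (Set.mem_range_self i'')) t
    have hXg : (X i'') ^ t * g ∈ Ideal.comap (inclAlg K (le_trans (Nat.sub_le m 1) hmn))
        (initialIdeal rlexLT (Fideal K A C ρ)) := by
      have h1 := Submodule.mem_colon.mp hgt _ hXmem
      rwa [smul_eq_mul, mul_comm] at h1
    rw [Ideal.mem_comap] at hXg
    set h : MvPolynomial (Fin n) K :=
      (inclAlg K (le_trans (Nat.sub_le m 1) hmn)) ((X i'') ^ t * g) with hh
    have hhdiv : h ∈ divIdeal K (A ∪ C ∪ shiftSet C ρ) :=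
      initialIdeal_le_divIdeal (Fideal_le_divIdeal hB.2.2.1) hXg
    have hhsupp : ∀ μ ∈ h.support, ∀ j : Fin n, i₀ ≤ j → μ j = 0 := by
      intro μ hμ j hj
      have hsupp2 : h.support = (((X i'') ^ t * g).support).image
          (Finsupp.mapDomain (Fin.castLE (le_trans (Nat.sub_le m 1) hmn))) := by
        rw [hh]
        exact support_rename_of_injective (Fin.strictMono_castLE _).injective
      rw [hsupp2] at hμ
      obtain ⟨ν', hν', rfl⟩ := Finset.mem_image.mp hμ
      apply Finsupp.mapDomain_notin_range
      rintro ⟨l, rfl⟩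
      have hl : (l : ℕ) < m - 1 := l.isLt
      have hj' : (i₀ : ℕ) ≤ (Fin.castLE (le_trans (Nat.sub_le m 1) hmn) l : ℕ) := hj
      rw [Fin.coe_castLE] at hj'
      omega
    have hstep := step_mul_mem hB hi₀pos hi' hhdiv hhsupp
    refine ⟨q + t, ?_⟩
    rw [Ideal.mem_comap, map_mul, map_pow, inclAlg_X, inclAlg_comp_apply]
    have hexp : (X (Fin.castLE hmn i) : MvPolynomial (Fin n) K) ^ (q + t) *
        (inclAlg K (le_trans (Nat.sub_le m 1) hmn)) g = X (Fin.castLE hmn i) ^ q * h := by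
      rw [hh, map_mul, map_pow, inclAlg_X]
      have hcc : Fin.castLE (le_trans (Nat.sub_le m 1) hmn) i'' = Fin.castLE hmn i :=
        Fin.ext rfl
      rw [hcc, pow_add]
      ring
    rw [hexp]
    exact hstep
  obtain ⟨s, hs⟩ := (IsNoetherian.noetherian (satIdeal (Ideal.comap (inclAlg K
      (le_trans (Nat.sub_le m 1) hmn)) (initialIdeal rlexLT (Fideal K A C ρ)))) :
    Submodule.FG _)
  set kf : MvPolynomial (Fin (m-1)) K → ℕ := fun g =>
    if hg : g ∈ satIdeal (Ideal.comap (inclAlg K (le_trans (Nat.sub_le m 1) hmn))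
      (initialIdeal rlexLT (Fideal K A C ρ))) then (hone g hg).choose else 0 with hkf
  refine ⟨s.sup kf, ?_⟩
  intro p hp
  rw [← hs, Ideal.submodule_span_eq, Ideal.map_span] at hp
  induction hp using Submodule.span_induction with
  | mem x hx =>
    obtain ⟨g, hgs, rfl⟩ := hx
    have hgI : g ∈ satIdeal (Ideal.comap (inclAlg K (le_trans (Nat.sub_le m 1) hmn))
        (initialIdeal rlexLT (Fideal K A C ρ))) := by
      rw [← hs]
      exact Submodule.subset_span hgs
    have hkg : kf g = (hone g hgI).choose := by rw [hkf]; exact dif_pos hgI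
    have hle : kf g ≤ s.sup kf := Finset.le_sup hgs
    have hmem := (hone g hgI).choose_spec
    rw [← hkg] at hmem
    have hsplit : (X i : MvPolynomial (Fin m) K) ^ (s.sup kf) * (inclAlg K (Nat.sub_le m 1)) g =
        X i ^ (s.sup kf - kf g) * (X i ^ (kf g) * (inclAlg K (Nat.sub_le m 1)) g) := by
      rw [← mul_assoc, ← pow_add, Nat.sub_add_cancel hle]
    rw [hsplit]
    exact Ideal.mul_mem_left _ _ (le_satIdeal _ hmem)
  | zero => rw [mul_zero]; exact Submodule.zero_mem _
  | add x y hx hy ihx ihy => rw [mul_add]; exact Ideal.add_mem _ ihx ihy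
  | smul a x hx ih => rw [smul_eq_mul, mul_left_comm]; exact Ideal.mul_mem_left _ _ ih


-- ==== chunk 4 ====

lemma mem_annihilator_idealQuot {R : Type*} [CommRing R] {J J' : Ideal R} {a : R}
    (h : ∀ p ∈ J, a * p ∈ J') : a ∈ Module.annihilator R (idealQuot J J') := by
  rw [Module.mem_annihilator]
  intro x
  obtain ⟨y, rfl⟩ := Submodule.Quotient.mk_surjective
    (Submodule.comap (Submodule.subtype J) (J' : Submodule R R)) x
  have h1 : (a • (Submodule.Quotient.mk y) : idealQuot J J') = Submodule.Quotient.mk (a • y) :=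
    rfl
  refine h1.trans ((Submodule.Quotient.mk_eq_zero _).mpr ?_)
  rw [Submodule.mem_comap]
  show (↑(a • y) : R) ∈ J'
  rw [Submodule.coe_smul, smul_eq_mul]
  exact h (y : R) y.2

lemma map_lt_map_of_prime {R S : Type*} [CommRing R] [CommRing S] (g : R →+* S)
    (hg : Function.Surjective g) {P Q : Ideal R} (hkP : RingHom.ker g ≤ P)
    (hPQ : P < Q) : Ideal.map g P < Ideal.map g Q := by
  refine lt_of_le_of_ne (Ideal.map_mono hPQ.le) fun heq => hPQ.ne ?_
  have h1 : Ideal.comap g (Ideal.map g P) = P := by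
    rw [Ideal.comap_map_of_surjective g hg]
    exact sup_eq_left.mpr hkP
  have h2 : Ideal.comap g (Ideal.map g Q) = Q := by
    rw [Ideal.comap_map_of_surjective g hg]
    exact sup_eq_left.mpr (le_trans hkP hPQ.le)
  rw [← h1, ← h2, heq]

lemma comap_lt_comap_of_surj {R S : Type*} [CommRing R] [CommRing S] (g : R →+* S)
    (hg : Function.Surjective g) {P Q : Ideal S} (hPQ : P < Q) :
    Ideal.comap g P < Ideal.comap g Q := by
  refine lt_of_le_of_ne (Ideal.comap_mono hPQ.le) fun heq => hPQ.ne ?_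
  rw [← Ideal.map_comap_of_surjective g hg P, ← Ideal.map_comap_of_surjective g hg Q, heq]

lemma no_three_primes {S : Type*} [CommRing S] [IsDomain S] [IsPrincipalIdealRing S]
    {P Q T : Ideal S} (hP : P.IsPrime) (hQ : Q.IsPrime) (hT : T.IsPrime)
    (hPQ : P < Q) (hQT : Q < T) : False := by
  have hQbot : Q ≠ ⊥ := by
    intro hbot
    rw [hbot] at hPQ
    exact (not_lt_bot hPQ)
  haveI := hQ
  have hQmax : Q.IsMaximal := IsPrime.to_maximal_ideal hQbot
  exact hT.ne_top (hQmax.out.2 _ hQT)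

set_option maxHeartbeats 1000000 in
lemma ringKrullDim_le_one_of_adjoin {K R : Type*} [Field K] [CommRing R] [Algebra K R]
    (T : Set R) (hnil : ∀ t ∈ T, ∃ k : ℕ, t ^ k = 0) (x : R)
    (hgen : (⊤ : Subalgebra K R) ≤ Algebra.adjoin K (insert x T)) :
    ringKrullDim R ≤ 1 := by
  classical
  set I : Ideal R := Ideal.span T with hI
  set f := Ideal.Quotient.mkₐ K I with hf
  have hfs : Function.Surjective f := Ideal.Quotient.mkₐ_surjective K I
  have htop : Algebra.adjoin K {f x} = ⊤ := by
    rw [eq_top_iff]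
    have h1 : (⊤ : Subalgebra K (R ⧸ I)) = Subalgebra.map f ⊤ := by
      rw [Algebra.map_top]
      exact ((AlgHom.range_eq_top _).mpr hfs).symm
    rw [h1]
    have h2 : (⊤ : Subalgebra K R) = Algebra.adjoin K (insert x T) := le_antisymm hgen le_top
    rw [h2, AlgHom.map_adjoin]
    apply Algebra.adjoin_le
    rintro y ⟨z, hz, rfl⟩
    rcases Set.mem_insert_iff.mp hz with rfl | hzT
    · exact Algebra.subset_adjoin rfl
    · have hz0 : f z = 0 := by
        rw [hf, Ideal.Quotient.mkₐ_eq_mk, Ideal.Quotient.eq_zero_iff_mem]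
        exact Ideal.subset_span hzT
      rw [hz0]
      exact Subalgebra.zero_mem _
  set β := Polynomial.aeval (R := K) (f x) with hβdef
  have hβs : Function.Surjective β := by
    intro y
    have hy : y ∈ Algebra.adjoin K {f x} := htop ▸ Algebra.mem_top
    rw [Algebra.adjoin_singleton_eq_range_aeval] at hy
    exact hy
  have hchain : ∀ l : LTSeries (PrimeSpectrum R), l.length ≤ 1 := by
    intro l
    by_contra hl
    push_neg at hl
    set j0 : Fin (l.length + 1) := ⟨0, by omega⟩ with hj0
    set j1 : Fin (l.length + 1) := ⟨1, by omega⟩ with hj1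
    set j2 : Fin (l.length + 1) := ⟨2, by omega⟩ with hj2
    have h0 : j0 < j1 := Fin.mk_lt_mk.mpr (by omega)
    have h1 : j1 < j2 := Fin.mk_lt_mk.mpr (by omega)
    have hP01 : l.toFun j0 < l.toFun j1 := l.strictMono h0
    have hP12 : l.toFun j1 < l.toFun j2 := l.strictMono h1
    have hTsub : ∀ P : PrimeSpectrum R, RingHom.ker (f : R →+* R ⧸ I) ≤ P.asIdeal := by
      intro P
      rw [Ideal.Quotient.mkₐ_ker, hI, Ideal.span_le]
      intro t ht
      obtain ⟨k, hk⟩ := hnil t ht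
      exact P.isPrime.mem_of_pow_mem k (hk ▸ P.asIdeal.zero_mem)
    set g : R →+* R ⧸ I := (f : R →+* R ⧸ I) with hg
    have hlt1 : Ideal.map g (l.toFun j0).asIdeal < Ideal.map g (l.toFun j1).asIdeal :=
      map_lt_map_of_prime g hfs (hTsub _) hP01
    have hlt2 : Ideal.map g (l.toFun j1).asIdeal < Ideal.map g (l.toFun j2).asIdeal :=
      map_lt_map_of_prime g hfs (hTsub _) hP12
    haveI hpr0 : (Ideal.map g (l.toFun j0).asIdeal).IsPrime :=
      haveI := (l.toFun j0).isPrime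
      Ideal.map_isPrime_of_surjective hfs (hTsub _)
    haveI hpr1 : (Ideal.map g (l.toFun j1).asIdeal).IsPrime :=
      haveI := (l.toFun j1).isPrime
      Ideal.map_isPrime_of_surjective hfs (hTsub _)
    haveI hpr2 : (Ideal.map g (l.toFun j2).asIdeal).IsPrime :=
      haveI := (l.toFun j2).isPrime
      Ideal.map_isPrime_of_surjective hfs (hTsub _)
    have hq1 : Ideal.comap (β : Polynomial K →+* R ⧸ I) (Ideal.map g (l.toFun j0).asIdeal) <
        Ideal.comap (β : Polynomial K →+* R ⧸ I) (Ideal.map g (l.toFun j1).asIdeal) :=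
      comap_lt_comap_of_surj _ hβs hlt1
    have hq2 : Ideal.comap (β : Polynomial K →+* R ⧸ I) (Ideal.map g (l.toFun j1).asIdeal) <
        Ideal.comap (β : Polynomial K →+* R ⧸ I) (Ideal.map g (l.toFun j2).asIdeal) :=
      comap_lt_comap_of_surj _ hβs hlt2
    exact no_three_primes (Ideal.comap_isPrime _ _) (Ideal.comap_isPrime _ _)
      (Ideal.comap_isPrime _ _) hq1 hq2
  show Order.krullDim (PrimeSpectrum R) ≤ 1
  rw [Order.krullDim]
  refine iSup_le fun l => ?_
  have := hchain l
  exact_mod_cast Nat.cast_le.mpr this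


/-- with `m = m(ρ)`, every variable `X_i` with `i < m` lies in the radical
of the colon ideal `((F ∩ S_(m))^sat : ((in_rlex F) ∩ S_(m-1))^sat S_(m))`, and the
quotient module `((in_rlex F) ∩ S_(m-1))^sat S_(m) / (F ∩ S_(m))^sat` has dimension ≤ 1. -/
theorem stmt19 {K : Type*} [Field K] {n d : ℕ}
    (A C : Set (Fin n → ℕ)) (ρ : Fin n → ℤ)
    (hB : IsBinomialSystem d A C ρ) (hmp : mPos ρ)
    (m : ℕ) (hm : m = mIdx ρ) (hm0 : 0 < m) (hmn : m ≤ n) :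
    (∀ i : Fin m, (i : ℕ) < m - 1 →
      X i ∈ Ideal.radical (Submodule.colon
        (satIdeal (Ideal.comap (inclAlg K hmn) (Fideal K A C ρ)))
        (Ideal.map (inclAlg K (Nat.sub_le m 1))
          (satIdeal (Ideal.comap (inclAlg K (le_trans (Nat.sub_le m 1) hmn))
            (initialIdeal rlexLT (Fideal K A C ρ))))))) ∧
    moduleDim (MvPolynomial (Fin m) K)
      (idealQuot
        (Ideal.map (inclAlg K (Nat.sub_le m 1))
          (satIdeal (Ideal.comap (inclAlg K (le_trans (Nat.sub_le m 1) hmn))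
            (initialIdeal rlexLT (Fideal K A C ρ)))))
        (satIdeal (Ideal.comap (inclAlg K hmn) (Fideal K A C ρ)))) ≤
      (1 : WithBot (WithTop ℕ)) := by
  classical
  constructor
  · intro i hi
    obtain ⟨k, hk⟩ := key_colon (K := K) A C ρ hB hmp m hm hm0 hmn i hi
    exact Ideal.mem_radical_iff.mpr ⟨k, Submodule.mem_colon.mpr fun p hp => by
      rw [smul_eq_mul]; exact hk p hp⟩
  · show ringKrullDim ((MvPolynomial (Fin m) K) ⧸ Module.annihilator (MvPolynomial (Fin m) K)
      (idealQuot
        (Ideal.map (inclAlg K (Nat.sub_le m 1))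
          (satIdeal (Ideal.comap (inclAlg K (le_trans (Nat.sub_le m 1) hmn))
            (initialIdeal rlexLT (Fideal K A C ρ)))))
        (satIdeal (Ideal.comap (inclAlg K hmn) (Fideal K A C ρ))))) ≤ 1
    set ann := Module.annihilator (MvPolynomial (Fin m) K)
      (idealQuot
        (Ideal.map (inclAlg K (Nat.sub_le m 1))
          (satIdeal (Ideal.comap (inclAlg K (le_trans (Nat.sub_le m 1) hmn))
            (initialIdeal rlexLT (Fideal K A C ρ)))))
        (satIdeal (Ideal.comap (inclAlg K hmn) (Fideal K A C ρ)))) with hann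
    have hlast : m - 1 < m := by omega
    apply ringKrullDim_le_one_of_adjoin (K := K)
      ((fun j : Fin m => Ideal.Quotient.mk ann (X j)) '' {j : Fin m | (j : ℕ) < m - 1})
      ?_ (Ideal.Quotient.mk ann (X ⟨m - 1, hlast⟩)) ?_
    · rintro t ⟨j, hj, rfl⟩
      obtain ⟨k, hk⟩ := key_colon (K := K) A C ρ hB hmp m hm hm0 hmn j hj
      refine ⟨k, ?_⟩
      rw [← map_pow, Ideal.Quotient.eq_zero_iff_mem]
      exact mem_annihilator_idealQuot hk
    · have h1 : Algebra.adjoin K (Set.range (X : Fin m → MvPolynomial (Fin m) K)) = ⊤ :=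
        adjoin_range_X
      have hsurj : Function.Surjective (Ideal.Quotient.mkₐ K ann) :=
        Ideal.Quotient.mkₐ_surjective K ann
      have h2 : (⊤ : Subalgebra K (MvPolynomial (Fin m) K ⧸ ann)) =
          Subalgebra.map (Ideal.Quotient.mkₐ K ann) ⊤ := by
        rw [Algebra.map_top]
        exact ((AlgHom.range_eq_top _).mpr hsurj).symm
      rw [h2, ← h1, AlgHom.map_adjoin]
      apply Algebra.adjoin_le
      rintro y ⟨z, ⟨j, rfl⟩, rfl⟩
      by_cases hj : (j : ℕ) < m - 1
      · refine Algebra.subset_adjoin (Set.mem_insert_iff.mpr (Or.inr ⟨j, hj, ?_⟩))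
        rw [Ideal.Quotient.mkₐ_eq_mk]
      · have hje : j = ⟨m - 1, hlast⟩ := Fin.ext (show (j : ℕ) = m - 1 by have := j.isLt; omega)
        rw [hje]
        refine Algebra.subset_adjoin (Set.mem_insert_iff.mpr (Or.inl ?_))
        rw [Ideal.Quotient.mkₐ_eq_mk]

end Fumasoli
end
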